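/- Let G and H be finite simple graphs and let F be an arc set of G containing no chain twist. Define the arc set F^□ of the Cartesian product G □ H by: ((v,u),(w,u')) ∈ F^□ if and only if u = u' and (v,w) ∈ F. Then F^□ is an arc set of G □ H containing no chain twist, and |F^□| = |F| · |V(H)|. -/

import Mathlib

/-! ## Bit-string vertices -/

/-- The bit string of length `n` whose ones are exactly at the positions in `s`. -/
def oneAt (n : ℕ) (s : List ℕ) : Fin n → Bool := fun i => decide (i.val ∈ s)

/-- The vertex `01 0^{n-4} 0 0`. -/
def vA (n : ℕ) : Fin n → Bool := oneAt n [1]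
/-- The vertex `01 0^{n-4} 0 1`. -/
def vB (n : ℕ) : Fin n → Bool := oneAt n [1, n-1]
/-- The vertex `10 0^{n-4} 1 0`. -/
def vC (n : ℕ) : Fin n → Bool := oneAt n [0, n-2]
/-- The vertex `10 0^{n-4} 1 1`. -/
def vD (n : ℕ) : Fin n → Bool := oneAt n [0, n-2, n-1]
/-- The tail `01 0^{n-4} 1 0` of the bridge arc. -/
def bridgeTail (n : ℕ) : Fin n → Bool := oneAt n [1, n-2]
/-- The head `01 0^{n-4} 1 1` of the bridge arc. -/
def bridgeHead (n : ℕ) : Fin n → Bool := oneAt n [1, n-2, n-1]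

/-! ## The minority cube -/

/-- The matching joining the two copies of `\hat Q_n` in the construction of the
minority cube `\hat Q_{n+1}`: the standard matching (vertices differing only in
the last bit), except that the standard edges `vA–vB` and `vC–vD` are replaced by
the twisted edges `vA–vD` and `vC–vB`. -/
def matchRel (n : ℕ) (u v : Fin (n+1) → Bool) : Prop :=
  (Fin.init u = Fin.init v ∧ u (Fin.last n) ≠ v (Fin.last n) ∧
    ({u, v} : Set (Fin (n+1) → Bool)) ≠ {vA (n+1), vB (n+1)} ∧
    ({u, v} : Set (Fin (n+1) → Bool)) ≠ {vC (n+1), vD (n+1)}) ∨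
  ({u, v} : Set (Fin (n+1) → Bool)) = {vA (n+1), vD (n+1)} ∨
  ({u, v} : Set (Fin (n+1) → Bool)) = {vC (n+1), vB (n+1)}

/-- Hypercube adjacency: differ in exactly one position. -/
def cubeRel (n : ℕ) (u v : Fin n → Bool) : Prop := ∃! i, u i ≠ v i

/-- The adjacency relation of the minority cube `\hat Q_n`: for `n ≤ 3` it is the
hypercube `Q_n`; for `n ≥ 4` two vertices are adjacent if they lie in the same copy
of `\hat Q_{n-1}` (same last bit) and are adjacent there, or they are joined by the
matching between the copies. -/
def minRel : (n : ℕ) → (Fin n → Bool) → (Fin n → Bool) → Prop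
  | 0 => cubeRel 0
  | 1 => cubeRel 1
  | 2 => cubeRel 2
  | 3 => cubeRel 3
  | (n+4) => fun u v =>
      (u (Fin.last (n+3)) = v (Fin.last (n+3)) ∧
        minRel (n+3) (Fin.init u) (Fin.init v)) ∨ matchRel (n+3) u v

/-- The minority cube `\hat Q_n` as a simple graph on `{0,1}^n`. -/
def hatQ (n : ℕ) : SimpleGraph (Fin n → Bool) := SimpleGraph.fromRel (minRel n)

/-- Append the bit `b` to both coordinates of a pair of bit strings. -/
def snocPair {n : ℕ} (p : (Fin n → Bool) × (Fin n → Bool)) (b : Bool) :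
    (Fin (n+1) → Bool) × (Fin (n+1) → Bool) := (Fin.snoc p.1 b, Fin.snoc p.2 b)

/-- The arc set `F_n` of the minority cube: `F_3` consists of the four arcs
`000→100, 100→110, 001→101, 101→111`; and `F_{n+1}` is the union of the two copies of
`F_n` (labels extended by the appended bit) together with the bridge arc
`01 0^{n-3} 1 0 → 01 0^{n-3} 1 1`. -/
def minF : (n : ℕ) → Set ((Fin n → Bool) × (Fin n → Bool))
  | 0 => ∅
  | 1 => ∅
  | 2 => ∅
  | 3 => {(oneAt 3 [], oneAt 3 [0]), (oneAt 3 [0], oneAt 3 [0,1]),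
          (oneAt 3 [2], oneAt 3 [0,2]), (oneAt 3 [0,2], oneAt 3 [0,1,2])}
  | (n+4) => (⋃ b : Bool, (fun p => snocPair p b) '' minF (n+3))
             ∪ {(bridgeTail (n+4), bridgeHead (n+4))}

/-! ## Arc sets, chains, chain twists -/

/-- `F` is an arc set of `G`: every pair in `F` is an edge of `G`,
and no arc appears in both orientations. -/
def IsArcSet {V : Type*} (G : SimpleGraph V) (F : Set (V × V)) : Prop :=
  ∀ p ∈ F, G.Adj p.1 p.2 ∧ (p.2, p.1) ∉ F

/-- A vertex is isolated in an arc set `F` if it is incident to no arc of `F`. -/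
def IsIsolatedVtx {V : Type*} (F : Set (V × V)) (v : V) : Prop :=
  ∀ u, (u, v) ∉ F ∧ (v, u) ∉ F

/-- A chain twist of the arc set `F` in `G`: a cycle `c` (at least 3 distinct
vertices, consecutive ones adjacent, indices mod `k`) such that whenever an edge of
the cycle is not a (forward) arc of `F`, the preceding and following edges are. -/
def IsChainTwist {V : Type*} (G : SimpleGraph V) (F : Set (V × V)) {k : ℕ}
    (c : ZMod k → V) : Prop :=
  3 ≤ k ∧ Function.Injective c ∧ (∀ i, G.Adj (c i) (c (i+1))) ∧
  ∀ i, (c i, c (i+1)) ∉ F → ((c (i-1), c i) ∈ F ∧ (c (i+1), c (i+2)) ∈ F)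

/-- `F` contains a chain twist in `G`. -/
def HasChainTwist {V : Type*} (G : SimpleGraph V) (F : Set (V × V)) : Prop :=
  ∃ (k : ℕ) (c : ZMod k → V), IsChainTwist G F c

/-- A chain twist path of the arc set `F` in `G`: a path `c = v_0 v_1 … v_{k-1}`
such that for every interior index `i` (`1 ≤ i`, `i + 1 < k`), if the edge
`(v_i, v_{i+1})` is not an arc of `F`, then `(v_{i-1}, v_i)` is an arc of `F` and
(whenever the index exists) `(v_{i+1}, v_{i+2})` is an arc of `F`. -/
def IsChainTwistPath {V : Type*} (G : SimpleGraph V) (F : Set (V × V)) {k : ℕ}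
    (c : Fin k → V) : Prop :=
  Function.Injective c ∧
  (∀ i : ℕ, ∀ h : i + 1 < k, G.Adj (c ⟨i, by omega⟩) (c ⟨i+1, h⟩)) ∧
  (∀ i : ℕ, 1 ≤ i → ∀ h : i + 1 < k,
    (c ⟨i, by omega⟩, c ⟨i+1, h⟩) ∉ F →
      (c ⟨i-1, by omega⟩, c ⟨i, by omega⟩) ∈ F ∧
      ∀ h2 : i + 2 < k, (c ⟨i+1, by omega⟩, c ⟨i+2, h2⟩) ∈ F)

/-- A chain of the arc set `F` with `k` arcs: a directed path `c = v_0 → v_1 → … → v_k`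
all of whose consecutive pairs are arcs of `F`, which is maximal (no arc of `F` enters
`v_0` and no arc of `F` leaves `v_k`). -/
def IsArcChain {V : Type*} (F : Set (V × V)) {k : ℕ} (c : Fin (k+1) → V) : Prop :=
  Function.Injective c ∧
  (∀ i : ℕ, ∀ h : i + 1 < k + 1, (c ⟨i, by omega⟩, c ⟨i+1, h⟩) ∈ F) ∧
  (∀ u, (u, c 0) ∉ F) ∧ (∀ u, (c (Fin.last k), u) ∉ F)

/-! ## Zero forcing -/

/-- The zero forcing closure of the initial blue set `S` in the graph `G`:
the set of vertices eventually coloured blue by iterating the colour change rule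
"a blue vertex with exactly one white neighbour forces that neighbour". -/
inductive ZFClosure {V : Type*} (G : SimpleGraph V) (S : Set V) : V → Prop
  | init (v : V) (hv : v ∈ S) : ZFClosure G S v
  | force (u v : V) (hu : ZFClosure G S u) (huv : G.Adj u v)
      (h : ∀ w, G.Adj u w → w ≠ v → ZFClosure G S w) : ZFClosure G S v

/-- `S` is a zero forcing set of `G`: iterating the colour change rule starting from
`S` eventually colours every vertex blue. -/
def IsZeroForcingSet {V : Type*} (G : SimpleGraph V) (S : Set V) : Prop :=
  ∀ v, ZFClosure G S v

/-- The zero forcing number of a finite graph: the minimum size of a zero forcing set. -/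
noncomputable def zeroForcingNumber {V : Type*} [Fintype V] (G : SimpleGraph V) : ℕ :=
  sInf {k | ∃ S : Finset V, S.card = k ∧ IsZeroForcingSet G ↑S}

/-- The arc set `F^□` of the Cartesian product `G □ H` induced by an arc set `F` of
`G`: a copy of `F` inside each copy of `G`. -/
def boxArcs {α β : Type*} (F : Set (α × α)) : Set ((α × β) × (α × β)) :=
  {p | p.1.2 = p.2.2 ∧ (p.1.1, p.2.1) ∈ F}

section Aux

private lemma emod_shift (m j δ : ℤ) : (j + δ) % m = (j % m + δ) % m := by
  conv_lhs => rw [show j + δ = (j % m + δ) + m * (j / m) by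
    have h := Int.emod_add_mul_ediv j m; linarith]
  rw [Int.add_mul_emod_self_left]

/-- The "window" walk: traverse `w` on the window `[s, s+m)` cyclically. -/
private def win {V : Type*} (w : ℤ → V) (s : ℤ) (m : ℕ) : ℤ → V :=
  fun j => w (s + j % (m : ℤ))

private lemma win_pair {V : Type*} (w : ℤ → V) (s : ℤ) (m : ℕ) (hm : 0 < m)
    (hwrap : w (s + (m:ℤ)) = w s) (j : ℤ) :
    (win w s m j, win w s m (j+1)) = (w (s + j % (m:ℤ)), w (s + j % (m:ℤ) + 1)) := by
  have hmz : (0:ℤ) < (m:ℤ) := by exact_mod_cast hm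
  have h0 : 0 ≤ j % (m:ℤ) := Int.emod_nonneg j (by omega)
  have h1 : j % (m:ℤ) < m := Int.emod_lt_of_pos j hmz
  have key : win w s m (j+1) = w (s + j % (m:ℤ) + 1) := by
    show w (s + (j+1) % (m:ℤ)) = _
    rw [emod_shift]
    by_cases hc : j % (m:ℤ) + 1 < m
    · rw [Int.emod_eq_of_lt (by omega) hc, add_assoc]
    · have he : j % (m:ℤ) + 1 = m := by omega
      rw [he, Int.emod_self, show s + j % (m:ℤ) + 1 = s + (m:ℤ) by omega, hwrap, add_zero]
  rw [key]
  rfl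

private lemma win_per {V : Type*} (w : ℤ → V) (s : ℤ) (m : ℕ)
    (j : ℤ) : win w s m (j + (m:ℤ)) = win w s m j := by
  show w (s + (j + (m:ℤ)) % (m:ℤ)) = w (s + j % (m:ℤ))
  rw [emod_shift, show j % (m:ℤ) + (m:ℤ) = j % (m:ℤ) + (m:ℤ) * 1 by ring,
    Int.add_mul_emod_self_left, Int.emod_emod_of_dvd _ dvd_rfl]

private lemma emod_pred {m : ℕ} (hm : 0 < m) (j : ℤ) (h0 : j % (m:ℤ) = 0) :
    (j - 1) % (m:ℤ) = (m:ℤ) - 1 := by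
  have h3 : (((m:ℤ)-1) + (m:ℤ)*(-1)) % (m:ℤ) = ((m:ℤ)-1) % (m:ℤ) :=
    Int.add_mul_emod_self_left _ _ _
  rw [show ((m:ℤ)-1) + (m:ℤ)*(-1) = -1 by ring] at h3
  rw [sub_eq_add_neg, emod_shift, h0, show (0:ℤ) + -1 = -1 by ring, h3]
  exact Int.emod_eq_of_lt (by omega) (by omega)

private lemma emod_pred' {m : ℕ} (hm : 0 < m) (j : ℤ) (h0 : 1 ≤ j % (m:ℤ)) :
    (j - 1) % (m:ℤ) = j % (m:ℤ) - 1 := by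
  have h1 : j % (m:ℤ) < m := Int.emod_lt_of_pos j (by exact_mod_cast hm)
  rw [sub_eq_add_neg, emod_shift]
  rw [show j % (m:ℤ) + -1 = j % (m:ℤ) - 1 by ring]
  exact Int.emod_eq_of_lt (by omega) (by omega)

private lemma emod_succ {m : ℕ} (hm : 0 < m) (j : ℤ) (h0 : j % (m:ℤ) + 1 < m) :
    (j + 1) % (m:ℤ) = j % (m:ℤ) + 1 := by
  have h2 : 0 ≤ j % (m:ℤ) := Int.emod_nonneg j (by omega)
  rw [emod_shift]
  exact Int.emod_eq_of_lt (by omega) h0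

private lemma emod_succ' {m : ℕ} (hm : 0 < m) (j : ℤ) (h0 : j % (m:ℤ) = (m:ℤ) - 1) :
    (j + 1) % (m:ℤ) = 0 := by
  rw [emod_shift, h0, show (m:ℤ) - 1 + 1 = (m:ℤ) by ring, Int.emod_self]

private lemma win_conds {V : Type*} {G : SimpleGraph V} {F : Set (V × V)}
    (hF : IsArcSet G F) (w : ℤ → V)
    (hA1 : ∀ i, w i = w (i+1) ∨ G.Adj (w i) (w (i+1)))
    (hA2 : ∀ i, (w i, w (i+1)) ∉ F → (w (i-1), w i) ∈ F ∧ (w (i+1), w (i+2)) ∈ F)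
    (s : ℤ) (m : ℕ) (hm : 3 ≤ m) (hwrap : w (s + (m:ℤ)) = w s)
    (hseam : (w s, w (s+1)) ∈ F ∨ (w (s + (m:ℤ) - 1), w (s + (m:ℤ))) ∈ F) :
    (∀ j, win w s m (j + ((m:ℕ):ℤ)) = win w s m j) ∧
    (∀ j, win w s m j = win w s m (j+1) ∨ G.Adj (win w s m j) (win w s m (j+1))) ∧
    (∀ j, (win w s m j, win w s m (j+1)) ∉ F →
      (win w s m (j-1), win w s m j) ∈ F ∧ (win w s m (j+1), win w s m (j+2)) ∈ F) := by
  have hm0 : 0 < m := by omega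
  have hmz : (3:ℤ) ≤ (m:ℤ) := by exact_mod_cast hm
  have hP := fun j => win_pair w s m hm0 hwrap j
  refine ⟨fun j => win_per w s m j, ?_, ?_⟩
  · intro j
    have h1 : win w s m j = w (s + j % (m:ℤ)) := rfl
    have h2 : win w s m (j+1) = w (s + j % (m:ℤ) + 1) := congrArg Prod.snd (hP j)
    rw [h1, h2]
    exact hA1 (s + j % (m:ℤ))
  · intro j hnot
    have hprev : (win w s m (j-1), win w s m j)
        = (w (s + (j-1) % (m:ℤ)), w (s + (j-1) % (m:ℤ) + 1)) := by
      have := hP (j-1); rwa [show j - 1 + 1 = j by ring] at this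
    have hnext : (win w s m (j+1), win w s m (j+2))
        = (w (s + (j+1) % (m:ℤ)), w (s + (j+1) % (m:ℤ) + 1)) := by
      have := hP (j+1); rwa [show j + 1 + 1 = j + 2 by ring] at this
    rw [hP j] at hnot
    have h0 : 0 ≤ j % (m:ℤ) := Int.emod_nonneg j (by omega)
    have h1 : j % (m:ℤ) < m := Int.emod_lt_of_pos j (by omega)
    by_cases hr0 : j % (m:ℤ) = 0
    · rw [hr0] at hnot
      rw [show s + 0 = s by ring] at hnot
      rw [show s + 1 = s + 0 + 1 by ring] at hnot
      rw [show s + 0 + 1 = s + 1 by ring] at hnot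
      rcases hseam with hs | hs
      · exact absurd hs hnot
      · constructor
        · rw [hprev, emod_pred hm0 j hr0,
            show s + ((m:ℤ) - 1) = s + (m:ℤ) - 1 by ring,
            show s + (m:ℤ) - 1 + 1 = s + (m:ℤ) by ring]
          exact hs
        · rw [hnext, emod_succ hm0 j (by omega), hr0,
            show s + (0 + 1) = s + 1 by ring,
            show s + 1 + 1 = s + 2 by ring]
          exact (hA2 s hnot).2
    · by_cases hrm : j % (m:ℤ) = (m:ℤ) - 1
      · rw [hrm, show s + ((m:ℤ)-1) = s + (m:ℤ) - 1 by ring,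
          show s + (m:ℤ) - 1 + 1 = s + (m:ℤ) by ring] at hnot
        rcases hseam with hs | hs
        · constructor
          · rw [hprev, emod_pred' hm0 j (by omega), hrm]
            have := hA2 (s + (m:ℤ) - 1)
              (by rw [show s + (m:ℤ) - 1 + 1 = s + (m:ℤ) by ring]; exact hnot)
            rw [show s + ((m:ℤ) - 1 - 1) = s + (m:ℤ) - 1 - 1 by ring,
              show s + (m:ℤ) - 1 - 1 + 1 = s + (m:ℤ) - 1 by ring]
            exact this.1
          · rw [hnext, emod_succ' hm0 j hrm, show s + (0:ℤ) = s by ring,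
              show s + 1 = s + 1 by ring]
            exact hs
        · exact absurd hs hnot
      · have hint : 1 ≤ j % (m:ℤ) ∧ j % (m:ℤ) + 1 < m := by omega
        have h2 := hA2 (s + j % (m:ℤ)) (by
          rw [show s + j % (m:ℤ) + 1 = s + j % (m:ℤ) + 1 by ring]; exact hnot)
        constructor
        · rw [hprev, emod_pred' hm0 j hint.1,
            show s + (j % (m:ℤ) - 1) = s + j % (m:ℤ) - 1 by ring,
            show s + j % (m:ℤ) - 1 + 1 = s + j % (m:ℤ) by ring]
          exact h2.1
        · rw [hnext, emod_succ hm0 j hint.2,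
            show s + (j % (m:ℤ) + 1) = s + j % (m:ℤ) + 1 by ring,
            show s + j % (m:ℤ) + 1 + 1 = s + j % (m:ℤ) + 2 by ring]
          exact h2.2

private lemma win_A3 {V : Type*} {G : SimpleGraph V} {F : Set (V × V)}
    (hF : IsArcSet G F) (w : ℤ → V)
    (hA3 : ∀ i, w (i-1) ≠ w (i+1))
    (s : ℤ) (m : ℕ) (hm : 3 ≤ m) (hwrap : w (s + (m:ℤ)) = w s)
    (hs1 : (w s, w (s+1)) ∈ F)
    (hs2 : (w (s + (m:ℤ) - 1), w (s + (m:ℤ))) ∈ F) :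
    ∀ j, win w s m (j-1) ≠ win w s m (j+1) := by
  have hm0 : 0 < m := by omega
  have hmz : (3:ℤ) ≤ (m:ℤ) := by exact_mod_cast hm
  intro j
  have h0 : 0 ≤ j % (m:ℤ) := Int.emod_nonneg j (by omega)
  have h1 : j % (m:ℤ) < m := Int.emod_lt_of_pos j (by omega)
  have e1 : win w s m (j-1) = w (s + (j-1) % (m:ℤ)) := rfl
  have e2 : win w s m (j+1) = w (s + (j+1) % (m:ℤ)) := rfl
  rw [e1, e2]
  by_cases hr0 : j % (m:ℤ) = 0
  · rw [emod_pred hm0 j hr0, emod_succ hm0 j (by omega), hr0]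
    intro hcon
    -- w (s+m-1) = w (s+1) gives two opposite arcs
    have hmem : (w (s+1), w s) ∈ F := by
      have := hs2
      rw [hwrap, show s + (m:ℤ) - 1 = s + ((m:ℤ) - 1) by ring, hcon,
        show s + (0 + 1) = s + 1 by ring] at this
      exact this
    exact (hF _ hs1).2 hmem
  · by_cases hrm : j % (m:ℤ) = (m:ℤ) - 1
    · rw [emod_pred' hm0 j (by omega), emod_succ' hm0 j hrm, hrm]
      intro hcon
      apply hA3 (s + (m:ℤ) - 1)
      rw [show s + (m:ℤ) - 1 - 1 = s + ((m:ℤ) - 1 - 1) by ring,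
        show s + (m:ℤ) - 1 + 1 = s + (m:ℤ) by ring, hwrap]
      rw [show s + ((m:ℤ) - 1 - 1) = s + ((m:ℤ) - 1 - 1) by ring] at hcon ⊢
      rw [show (s + ((m:ℤ) - 1 - 1)) = s + ((m:ℤ) - 1) - 1 by ring] at hcon ⊢
      rw [show s + 0 = s by ring] at hcon
      exact hcon
    · rw [emod_pred' hm0 j (by omega), emod_succ hm0 j (by omega)]
      intro hcon
      apply hA3 (s + j % (m:ℤ))
      rw [show s + j % (m:ℤ) - 1 = s + (j % (m:ℤ) - 1) by ring,
        show s + j % (m:ℤ) + 1 = s + (j % (m:ℤ) + 1) by ring]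
      exact hcon

end Aux


section Aux2

variable {V : Type*} {G : SimpleGraph V} {F : Set (V × V)}

private lemma mk_twist (u : ℤ → V) (d : ℕ) (hd : 3 ≤ d)
    (hper : ∀ i, u (i + (d:ℤ)) = u i)
    (hinj : ∀ a b : ℤ, 0 ≤ a → a < b → b < (d:ℤ) → u a ≠ u b)
    (hadj : ∀ i, G.Adj (u i) (u (i+1)))
    (hcond : ∀ i, (u i, u (i+1)) ∉ F → (u (i-1), u i) ∈ F ∧ (u (i+1), u (i+2)) ∈ F) :
    HasChainTwist G F := by
  haveI : NeZero d := ⟨by omega⟩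
  have hmul : ∀ (t : ℤ) (i : ℤ), u (i + t * (d:ℤ)) = u i := by
    intro t
    induction t using Int.induction_on with
    | zero => simp
    | succ k ih =>
      intro i
      rw [show i + ((k:ℤ)+1) * (d:ℤ) = (i + (k:ℤ) * (d:ℤ)) + (d:ℤ) by ring, hper, ih]
    | pred k ih =>
      intro i
      have h2 := hper (i + (-(k:ℤ)-1) * (d:ℤ))
      rw [show (i + (-(k:ℤ)-1) * (d:ℤ)) + (d:ℤ) = i + (-(k:ℤ)) * (d:ℤ) by ring] at h2
      rw [← h2, ih]
  have hcongr : ∀ a b : ℤ, a % (d:ℤ) = b % (d:ℤ) → u a = u b := by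
    intro a b hab
    have key : ∀ x : ℤ, u x = u (x % (d:ℤ)) := by
      intro x
      conv_lhs => rw [show x = x % (d:ℤ) + (x / (d:ℤ)) * (d:ℤ) by
        have := Int.emod_add_mul_ediv x (d:ℤ); linarith]
      exact hmul _ _
    rw [key a, key b, hab]
  have hnatv : ∀ x : ZMod d, ((x.val : ℕ) : ZMod d) = x := fun x =>
    ZMod.natCast_rightInverse x
  have hZcongr : ∀ (x : ZMod d) (t : ℤ), (t : ZMod d) = x → u ((x.val : ℤ)) = u t := by
    intro x t h
    apply hcongr
    have hc : (((x.val : ℤ)) : ZMod d) = (t : ZMod d) := by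
      rw [h]; push_cast; rw [hnatv]
    exact (ZMod.intCast_eq_intCast_iff' _ _ _).mp hc
  refine ⟨d, fun i => u ((i.val : ℤ)), hd, ?_, ?_, ?_⟩
  · intro i j hij
    simp only at hij
    rcases lt_trichotomy ((i.val : ℤ)) ((j.val : ℤ)) with h | h | h
    · exact absurd hij (hinj _ _ (by positivity) h (by exact_mod_cast ZMod.val_lt j))
    · have : i.val = j.val := by exact_mod_cast h
      exact ZMod.val_injective d this
    · exact absurd hij.symm (hinj _ _ (by positivity) h (by exact_mod_cast ZMod.val_lt i))
  · intro i
    have h1 : u (((i+1).val : ℤ)) = u ((i.val : ℤ) + 1) :=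
      hZcongr (i+1) ((i.val : ℤ) + 1) (by push_cast; rw [hnatv])
    show G.Adj (u ((i.val : ℤ))) (u (((i+1).val : ℤ)))
    rw [h1]
    exact hadj _
  · intro i hni
    have h1 : u (((i+1).val : ℤ)) = u ((i.val : ℤ) + 1) :=
      hZcongr (i+1) ((i.val : ℤ) + 1) (by push_cast; rw [hnatv])
    have h2 : u (((i-1).val : ℤ)) = u ((i.val : ℤ) - 1) :=
      hZcongr (i-1) ((i.val : ℤ) - 1) (by push_cast; rw [hnatv])
    have h3 : u (((i+2).val : ℤ)) = u ((i.val : ℤ) + 2) :=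
      hZcongr (i+2) ((i.val : ℤ) + 2) (by push_cast; rw [hnatv])
    simp only at hni ⊢
    rw [h1] at hni
    obtain ⟨f1, f2⟩ := hcond ((i.val : ℤ)) hni
    exact ⟨by rw [h2]; exact f1, by rw [h1, h3]; exact f2⟩

private theorem lemA (hF : IsArcSet G F) (hct : ¬ HasChainTwist G F) :
    ∀ n : ℕ, ∀ w : ℤ → V, 0 < n →
      (∀ i, w (i + (n:ℤ)) = w i) →
      (∀ i, w i = w (i+1) ∨ G.Adj (w i) (w (i+1))) →
      (∀ i, (w i, w (i+1)) ∉ F → (w (i-1), w i) ∈ F ∧ (w (i+1), w (i+2)) ∈ F) →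
      (∀ i, w (i-1) ≠ w (i+1)) → False := by
  intro n
  induction n using Nat.strong_induction_on with
  | _ n IH =>
  intro w hn hper hA1 hA2 hA3
  by_cases hn1 : n = 1
  · subst hn1
    have e : ∀ i : ℤ, w (i+1) = w i := fun i => by exact_mod_cast hper i
    apply hA3 0
    have a1 : w (0 - 1 + 1) = w (0 - 1) := e (0-1)
    rw [show (0:ℤ) - 1 + 1 = 0 by ring] at a1
    rw [← a1]
    exact (e 0).symm
  by_cases hn2 : n = 2
  · subst hn2
    apply hA3 0
    have e1 : w (-1 + (2:ℤ)) = w (-1) := by exact_mod_cast hper (-1)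
    rw [show (0:ℤ) - 1 = -1 by norm_num, show (0:ℤ) + 1 = -1 + 2 by norm_num]
    exact e1.symm
  have hn3 : 3 ≤ n := by omega
  by_cases hst : ∃ i, w i = w (i+1)
  · obtain ⟨i, hi⟩ := hst
    have hloopF : (w i, w (i+1)) ∉ F := by
      intro h
      have h2 := (hF _ h).1
      rw [← hi] at h2
      exact G.loopless.irrefl _ h2
    obtain ⟨hf1, hf2⟩ := hA2 i hloopF
    by_cases hn3e : n = 3
    · subst hn3e
      apply hA3 (i+2)
      rw [show i + 2 - 1 = i + 1 by ring, show i + 2 + 1 = i + ((3:ℕ):ℤ) by push_cast; ring,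
        hper i]
      exact hi.symm
    · have hm3 : 3 ≤ n - 1 := by omega
      have hwrap : w ((i+1) + ((n-1 : ℕ):ℤ)) = w (i+1) := by
        rw [show (i+1) + ((n-1:ℕ):ℤ) = i + (n:ℤ) by omega, hper i]
        exact hi
      have hs1 : (w (i+1), w ((i+1)+1)) ∈ F := by
        rw [show (i+1)+1 = i+2 by ring]; exact hf2
      have hs2 : (w ((i+1) + ((n-1:ℕ):ℤ) - 1), w ((i+1) + ((n-1:ℕ):ℤ))) ∈ F := by
        rw [show (i+1) + ((n-1:ℕ):ℤ) - 1 = (i-1) + (n:ℤ) by omega,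
          show (i+1) + ((n-1:ℕ):ℤ) = i + (n:ℤ) by omega, hper, hper]
        exact hf1
      obtain ⟨hper', hA1', hA2'⟩ := win_conds hF w hA1 hA2 (i+1) (n-1) hm3 hwrap (Or.inl hs1)
      have hA3' := win_A3 hF w hA3 (i+1) (n-1) hm3 hwrap hs1 hs2
      exact IH (n-1) (by omega) _ (by omega) hper' hA1' hA2' hA3'
  · push_neg at hst
    by_cases hrep : ∃ a b : ℤ, 0 ≤ a ∧ a < b ∧ b < (n:ℤ) ∧ w a = w b
    · obtain ⟨a, b, ha, hab, hbn, heq⟩ := hrep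
      set D : Set ℕ := {t | 0 < t ∧ (t:ℤ) < (n:ℤ) ∧ ∃ p : ℤ, w p = w (p + (t:ℤ))} with hD
      have hDne : D.Nonempty := by
        refine ⟨(b - a).toNat, by omega, by omega, a, ?_⟩
        rw [Int.toNat_of_nonneg (by omega), show a + (b - a) = b by ring]
        exact heq
      have hdD : sInf D ∈ D := Nat.sInf_mem hDne
      set d : ℕ := sInf D with hd
      obtain ⟨hd0, hdn, p, hp⟩ := hdD
      have hd1 : d ≠ 1 := by
        intro h
        apply hst p
        have := hp
        rw [h] at this
        exact_mod_cast this
      have hd2 : d ≠ 2 := by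
        intro h
        apply hA3 (p+1)
        rw [show p + 1 - 1 = p by ring, show p + 1 + 1 = p + 2 by ring]
        have := hp
        rw [h] at this
        exact_mod_cast this
      have hd3 : 3 ≤ d := by omega
      have hq1 : w ((p + (d:ℤ)) + ((n - d : ℕ):ℤ)) = w (p + (d:ℤ)) := by
        rw [show (p + (d:ℤ)) + ((n-d:ℕ):ℤ) = p + (n:ℤ) by omega, hper p]
        exact hp
      have hnd1 : n - d ≠ 1 := by
        intro h
        apply hst (p + (d:ℤ))
        have := hq1
        rw [h] at this
        have h2 : w (p + (d:ℤ) + 1) = w (p + (d:ℤ)) := by exact_mod_cast this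
        exact h2.symm
      have hnd2 : n - d ≠ 2 := by
        intro h
        apply hA3 (p + (d:ℤ) + 1)
        rw [show p + (d:ℤ) + 1 - 1 = p + (d:ℤ) by ring,
          show p + (d:ℤ) + 1 + 1 = p + (d:ℤ) + 2 by ring]
        have := hq1
        rw [h] at this
        have h2 : w (p + (d:ℤ) + 2) = w (p + (d:ℤ)) := by exact_mod_cast this
        exact h2.symm
      have hnd0 : 0 < n - d := by omega
      have hm3' : 3 ≤ n - d := by omega
      by_cases hS : (w p, w (p+1)) ∈ F ∨ (w (p + (d:ℤ) - 1), w (p + (d:ℤ))) ∈ F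
      · apply hct
        have hwrapS : w (p + (d:ℤ)) = w p := hp.symm
        obtain ⟨hperS, hA1S, hA2S⟩ := win_conds hF w hA1 hA2 p d hd3 hwrapS hS
        refine mk_twist (win w p d) d hd3 hperS ?_ ?_ hA2S
        · intro a' b' h0 hlt hbd heq'
          have ea : win w p d a' = w (p + a') := by
            show w (p + a' % (d:ℤ)) = _
            rw [Int.emod_eq_of_lt h0 (by omega)]
          have eb : win w p d b' = w (p + b') := by
            show w (p + b' % (d:ℤ)) = _
            rw [Int.emod_eq_of_lt (by omega) hbd]
          rw [ea, eb] at heq'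
          have htD : (b' - a').toNat ∈ D := by
            refine ⟨by omega, by omega, p + a', ?_⟩
            rw [Int.toNat_of_nonneg (by omega), show p + a' + (b' - a') = p + b' by ring]
            exact heq'
          have := Nat.sInf_le htD
          omega
        · intro j
          rcases hA1S j with he | ha
          · exfalso
            have hP := win_pair w p d (by omega) hwrapS j
            have h2 : win w p d (j+1) = w (p + j % (d:ℤ) + 1) := congrArg Prod.snd hP
            have h1 : win w p d j = w (p + j % (d:ℤ)) := rfl
            rw [h1, h2] at he
            exact hst _ he
          · exact ha
      · push_neg at hS
        obtain ⟨hS1, hS2⟩ := hS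
        obtain ⟨hg1, hg2⟩ := hA2 p hS1
        have hS2' : (w (p + (d:ℤ) - 1), w ((p + (d:ℤ) - 1) + 1)) ∉ F := by
          rw [show (p + (d:ℤ) - 1) + 1 = p + (d:ℤ) by ring]; exact hS2
        obtain ⟨hg3, hg4⟩ := hA2 (p + (d:ℤ) - 1) hS2'
        rw [show p + (d:ℤ) - 1 + 1 = p + (d:ℤ) by ring,
          show p + (d:ℤ) - 1 + 2 = p + (d:ℤ) + 1 by ring] at hg4
        have hs2T : (w ((p + (d:ℤ)) + ((n-d:ℕ):ℤ) - 1), w ((p + (d:ℤ)) + ((n-d:ℕ):ℤ))) ∈ F := by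
          rw [show (p + (d:ℤ)) + ((n-d:ℕ):ℤ) - 1 = (p-1) + (n:ℤ) by omega,
            show (p + (d:ℤ)) + ((n-d:ℕ):ℤ) = p + (n:ℤ) by omega, hper, hper]
          exact hg1
        have hs1T : (w (p + (d:ℤ)), w ((p + (d:ℤ)) + 1)) ∈ F := hg4
        obtain ⟨hperT, hA1T, hA2T⟩ :=
          win_conds hF w hA1 hA2 (p + (d:ℤ)) (n-d) hm3' hq1 (Or.inl hs1T)
        have hA3T := win_A3 hF w hA3 (p + (d:ℤ)) (n-d) hm3' hq1 hs1T hs2T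
        exact IH (n-d) (by omega) _ (by omega) hperT hA1T hA2T hA3T
    · push_neg at hrep
      apply hct
      refine mk_twist w n hn3 hper ?_ ?_ hA2
      · intro a' b' h0 h1 h2
        exact hrep a' b' h0 h1 h2
      · intro i
        rcases hA1 i with he | h
        · exact absurd he (hst i)
        · exact h

end Aux2


/-- Let `G`, `H` be finite simple graphs and `F` an arc set of `G`
with no chain twist. Then `F^□` is an arc set of `G □ H` with no chain twist, and
`|F^□| = |F| ⬝ |V(H)|`. -/
theorem boxArcs_arc_set_no_chain_twist {α β : Type*} [Fintype α] [Fintype β]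
    (G : SimpleGraph α) (H : SimpleGraph β) (F : Set (α × α))
    (hF : IsArcSet G F) (hct : ¬ HasChainTwist G F) :
    IsArcSet (G.boxProd H) (boxArcs (β := β) F) ∧
    ¬ HasChainTwist (G.boxProd H) (boxArcs (β := β) F) ∧
    (boxArcs (β := β) F).ncard = F.ncard * Fintype.card β := by
  refine ⟨?_, ?_, ?_⟩
  · -- arc set
    rintro p ⟨hsnd, hfst⟩
    obtain ⟨hadj, hrev⟩ := hF _ hfst
    refine ⟨?_, ?_⟩
    · rw [SimpleGraph.boxProd_adj]
      exact Or.inl ⟨hadj, hsnd⟩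
    · intro hmem
      exact hrev hmem.2
  · -- no chain twist
    rintro ⟨k, c, hk3, hcinj, hcadj, hccond⟩
    haveI : NeZero k := ⟨by omega⟩
    set w : ℤ → α := fun i => (c ((i : ℤ) : ZMod k)).1 with hw
    have hcast : ∀ i t : ℤ, ((i + t : ℤ) : ZMod k) = ((i : ℤ) : ZMod k) + (t : ZMod k) := by
      intro i t; push_cast; ring
    have hper : ∀ i : ℤ, w (i + (k:ℤ)) = w i := by
      intro i
      show (c ((i + (k:ℤ) : ℤ) : ZMod k)).1 = (c ((i:ℤ) : ZMod k)).1
      rw [hcast]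
      push_cast
      rw [ZMod.natCast_self, add_zero]
    have hA1 : ∀ i : ℤ, w i = w (i+1) ∨ G.Adj (w i) (w (i+1)) := by
      intro i
      have h := hcadj ((i : ℤ) : ZMod k)
      rw [SimpleGraph.boxProd_adj] at h
      have e1 : w (i+1) = (c (((i:ℤ) : ZMod k) + 1)).1 := by
        show (c ((i + 1 : ℤ) : ZMod k)).1 = _
        rw [hcast]; norm_num
      rcases h with ⟨ha, _⟩ | ⟨_, hfst⟩
      · right; rw [e1]; exact ha
      · left; rw [e1]; exact hfst
    have hA2 : ∀ i : ℤ, (w i, w (i+1)) ∉ F →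
        (w (i-1), w i) ∈ F ∧ (w (i+1), w (i+2)) ∈ F := by
      intro i hni
      have e1 : w (i+1) = (c (((i:ℤ) : ZMod k) + 1)).1 := by
        show (c ((i + 1 : ℤ) : ZMod k)).1 = _; rw [hcast]; norm_num
      have e2 : w (i-1) = (c (((i:ℤ) : ZMod k) - 1)).1 := by
        show (c ((i - 1 : ℤ) : ZMod k)).1 = _
        rw [sub_eq_add_neg, hcast]; push_cast; ring_nf
      have e3 : w (i+2) = (c (((i:ℤ) : ZMod k) + 2)).1 := by
        show (c ((i + 2 : ℤ) : ZMod k)).1 = _; rw [hcast]; norm_num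
      have hbox : (c ((i:ℤ) : ZMod k), c (((i:ℤ) : ZMod k) + 1)) ∉ boxArcs (β := β) F := by
        intro hmem
        apply hni
        have h2 := hmem.2
        rw [← e1] at h2
        exact h2
      obtain ⟨hfl1, hfl2⟩ := hccond ((i:ℤ) : ZMod k) hbox
      constructor
      · have := hfl1.2
        rw [← e2] at this
        exact this
      · have := hfl2.2
        rw [← e1, ← e3] at this
        exact this
    have hA3 : ∀ i : ℤ, w (i-1) ≠ w (i+1) := by
      intro i hcon
      have e1 : w (i+1) = (c (((i:ℤ) : ZMod k) + 1)).1 := by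
        show (c ((i + 1 : ℤ) : ZMod k)).1 = _; rw [hcast]; norm_num
      have e2 : w (i-1) = (c (((i:ℤ) : ZMod k) - 1)).1 := by
        show (c ((i - 1 : ℤ) : ZMod k)).1 = _
        rw [sub_eq_add_neg, hcast]; push_cast; ring_nf
      set j : ZMod k := ((i:ℤ) : ZMod k) with hj
      have hfst : (c (j - 1)).1 = (c (j + 1)).1 := by
        rw [← e1, ← e2]; exact hcon
      have hxz : c (j - 1) ≠ c (j + 1) := by
        intro h
        have h2 := hcinj h
        have h3 : (2 : ZMod k) = 0 := by linear_combination -h2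
        have h5 : ((2:ℕ) : ZMod k) = 0 := by exact_mod_cast h3
        have h6 := (ZMod.natCast_eq_zero_iff 2 k).mp h5
        have := Nat.le_of_dvd (by norm_num) h6
        omega
      have hsnd : (c (j-1)).2 ≠ (c (j+1)).2 := by
        intro h
        exact hxz (Prod.ext hfst h)
      have had1 := hcadj (j - 1)
      rw [show j - 1 + 1 = j by ring] at had1
      have had2 := hcadj j
      rw [SimpleGraph.boxProd_adj] at had1 had2
      rcases had1 with ⟨hg1, he1⟩ | ⟨hh1, he1⟩
      · rcases had2 with ⟨hg2, he2⟩ | ⟨hh2, he2⟩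
        · exact hsnd (he1.trans he2)
        · have hnb : (c j, c (j+1)) ∉ boxArcs (β := β) F := fun hm => hh2.ne hm.1
          obtain ⟨hfl1, _⟩ := hccond j hnb
          have hadjF : G.Adj (c (j-1)).1 (c j).1 := (hF _ hfl1.2).1
          apply hadjF.ne
          rw [hfst]
          exact he2.symm
      · have hnb : (c (j-1), c ((j-1)+1)) ∉ boxArcs (β := β) F := by
          rw [show j - 1 + 1 = j by ring]
          exact fun hm => hh1.ne hm.1
        obtain ⟨_, hfl2⟩ := hccond (j-1) hnb
        rw [show j - 1 + 1 = j by ring, show j - 1 + 2 = j + 1 by ring] at hfl2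
        have hadjF : G.Adj (c j).1 (c (j+1)).1 := (hF _ hfl2.2).1
        apply hadjF.ne
        exact he1.symm.trans hfst
    exact lemA hF hct k w (by omega) hper hA1 hA2 hA3
  · -- cardinality
    have e : (boxArcs (β := β) F) ≃ F × β :=
      { toFun := fun q => (⟨(q.1.1.1, q.1.2.1), q.2.2⟩, q.1.1.2)
        invFun := fun r => ⟨((r.1.1.1, r.2), (r.1.1.2, r.2)), rfl, by
          have := r.1.2
          simpa using this⟩
        left_inv := by
          rintro ⟨⟨⟨a, x⟩, ⟨b, y⟩⟩, hxy, hab⟩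
          simp only at hxy
          subst hxy
          rfl
        right_inv := by
          rintro ⟨⟨⟨a, b⟩, hab⟩, x⟩
          rfl }
    calc (boxArcs (β := β) F).ncard = Nat.card (boxArcs (β := β) F) :=
          (Nat.card_coe_set_eq _).symm
      _ = Nat.card (F × β) := Nat.card_congr e
      _ = Nat.card F * Nat.card β := Nat.card_prod _ _
      _ = F.ncard * Fintype.card β := by
          rw [Nat.card_coe_set_eq, Nat.card_eq_fintype_card]
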